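/- arXiv:2012.06719 — 3 statements merged into one kernel-verified Lean document; each statement's English description precedes it below -/
import Mathlib

section
/- R0 = (β1·S1*·p + β4·S2*·q + √M)/2 < 1 holds if and only if β1·S1*·p + β4·S2*·q < 2 and (1 - β1·S1*·p)·(1 - β4·S2*·q) > S1*·S2*·β2·β3·p·q, where M = (β1·S1*·p - β4·S2*·q)² + 4·S1*·S2*·β2·β3·p·q, assuming all of S1*, S2*, β1, β2, β3, β4, p, q are nonnegative. -/
/-- `R0 < 1` iff the trace-type condition and determinant-type condition hold. -/
theorem R0_lt_one_iff
    (β1 β2 β3 β4 p q S1 S2 : ℝ)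
    (hS1 : 0 ≤ S1) (hS2 : 0 ≤ S2)
    (hβ1 : 0 ≤ β1) (hβ2 : 0 ≤ β2) (hβ3 : 0 ≤ β3) (hβ4 : 0 ≤ β4)
    (hp : 0 ≤ p) (hq : 0 ≤ q)
    (M R0 : ℝ)
    (hM : M = (β1 * S1 * p - β4 * S2 * q) ^ 2 + 4 * S1 * S2 * β2 * β3 * p * q)
    (hR0 : R0 = (β1 * S1 * p + β4 * S2 * q + Real.sqrt M) / 2) :
    R0 < 1 ↔
      (β1 * S1 * p + β4 * S2 * q < 2 ∧
        (1 - β1 * S1 * p) * (1 - β4 * S2 * q) > S1 * S2 * β2 * β3 * p * q) := by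
  have hc : 0 ≤ S1 * S2 * β2 * β3 * p * q := by positivity
  have hM0 : 0 ≤ M := by rw [hM]; positivity
  have hs : 0 ≤ Real.sqrt M := Real.sqrt_nonneg M
  have hsq : Real.sqrt M ^ 2 = M := Real.sq_sqrt hM0
  constructor
  · intro h
    rw [hR0] at h
    have h1 : Real.sqrt M < 2 - (β1 * S1 * p + β4 * S2 * q) := by linarith
    have htr : β1 * S1 * p + β4 * S2 * q < 2 := by linarith
    have h2 : M < (2 - (β1 * S1 * p + β4 * S2 * q)) ^ 2 := by
      calc M = Real.sqrt M ^ 2 := hsq.symm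
        _ < (2 - (β1 * S1 * p + β4 * S2 * q)) ^ 2 := by
          apply pow_lt_pow_left₀ h1 hs
          norm_num
    refine ⟨htr, ?_⟩
    rw [hM] at h2
    nlinarith [h2]
  · rintro ⟨htr, hdet⟩
    have hpos : 0 < 2 - (β1 * S1 * p + β4 * S2 * q) := by linarith
    have h2 : M < (2 - (β1 * S1 * p + β4 * S2 * q)) ^ 2 := by
      rw [hM]; nlinarith [hdet]
    have h1 : Real.sqrt M < 2 - (β1 * S1 * p + β4 * S2 * q) :=
      (Real.sqrt_lt' hpos).mpr h2
    rw [hR0]; linarith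
end

section
/- If R0 < 1, where R0 = (β1·S1*·p + β4·S2*·q + √M)/2 with M = (β1·S1*·p - β4·S2*·q)² + 4·S1*·S2*·β2·β3·p·q, p = 1/(d1+μ+u11), q = 1/(d2+μ), and all parameters nonnegative with p, q > 0, then the matrix J = [[β1·S1* - (d1+μ+u11), β2·S1*],[β3·S2*, β4·S2* - (d2+μ)]] has trace(J) < 0 and det(J) > 0, hence both eigenvalues of J have negative real part. -/
/-- If `R0 < 1`, then the infected-compartment Jacobian at the disease-free
equilibrium has negative trace and positive determinant, hence both of its
eigenvalues have negative real part. -/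
theorem dfe_locally_stable_of_R0_lt_one
    (β1 β2 β3 β4 d1 d2 μ u11 S1 S2 : ℝ)
    (hS1 : 0 ≤ S1) (hS2 : 0 ≤ S2)
    (hβ1 : 0 ≤ β1) (hβ2 : 0 ≤ β2) (hβ3 : 0 ≤ β3) (hβ4 : 0 ≤ β4)
    (h1 : 0 < d1 + μ + u11) (h2 : 0 < d2 + μ)
    (p q M R0 : ℝ)
    (hp : p = 1 / (d1 + μ + u11)) (hq : q = 1 / (d2 + μ))
    (hM : M = (β1 * S1 * p - β4 * S2 * q) ^ 2 + 4 * S1 * S2 * β2 * β3 * p * q)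
    (hR0 : R0 = (β1 * S1 * p + β4 * S2 * q + Real.sqrt M) / 2)
    (hR0lt : R0 < 1)
    (J : Matrix (Fin 2) (Fin 2) ℝ)
    (hJ : J = !![β1 * S1 - (d1 + μ + u11), β2 * S1;
                 β3 * S2, β4 * S2 - (d2 + μ)]) :
    J.trace < 0 ∧ 0 < J.det := by
  have hpA : p * (d1 + μ + u11) = 1 := by rw [hp]; field_simp
  have hqB : q * (d2 + μ) = 1 := by rw [hq]; field_simp
  have hp0 : 0 < p := by rw [hp]; positivity
  have hq0 : 0 < q := by rw [hq]; positivity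
  set a := β1 * S1 * p with ha
  set b := β4 * S2 * q with hb
  have ha0 : 0 ≤ a := by positivity
  have hb0 : 0 ≤ b := by positivity
  have hc0 : 0 ≤ 4 * S1 * S2 * β2 * β3 * p * q := by positivity
  have hMnn : 0 ≤ M := by rw [hM]; positivity
  have habs : |a - b| ≤ Real.sqrt M := by
    rw [← Real.sqrt_sq_eq_abs]
    apply Real.sqrt_le_sqrt
    rw [hM]; linarith
  have hsM : Real.sqrt M ^ 2 = M := Real.sq_sqrt hMnn
  have hlt : Real.sqrt M < 2 - a - b := by
    rw [hR0] at hR0lt; linarith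
  have hM' : M < (2 - a - b) ^ 2 := by
    calc M = Real.sqrt M ^ 2 := hsM.symm
    _ < (2 - a - b) ^ 2 := by
        apply pow_lt_pow_left₀ hlt (Real.sqrt_nonneg M) two_ne_zero
  have habs' := abs_le.mp habs
  have ha1 : a < 1 := by cases habs' with | intro l r => linarith
  have hb1 : b < 1 := by cases habs' with | intro l r => linarith
  -- key inequality for determinant
  have hdetkey : 4 * S1 * S2 * β2 * β3 * p * q < 4 * (1 - a) * (1 - b) := by
    rw [hM] at hM'; nlinarith [sq_nonneg (a - b)]
  subst hJ
  constructor
  · rw [Matrix.trace_fin_two_of]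
    nlinarith [mul_pos hp0 hq0]
  · rw [Matrix.det_fin_two_of]
    have hAB : p * q * ((d1 + μ + u11) * (d2 + μ)) = 1 := by
      rw [hp, hq]; field_simp
    have hkey := mul_lt_mul_of_pos_right hdetkey (mul_pos h1 h2)
    have hL : 4 * S1 * S2 * β2 * β3 * p * q * ((d1 + μ + u11) * (d2 + μ))
        = 4 * (β2 * S1 * (β3 * S2)) := by
      linear_combination (4 * S1 * S2 * β2 * β3) * hAB
    have hR : 4 * (1 - a) * (1 - b) * ((d1 + μ + u11) * (d2 + μ))
        = 4 * (((d1 + μ + u11) - β1 * S1) * ((d2 + μ) - β4 * S2)) := by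
      rw [ha, hb, hp, hq]
      field_simp
    rw [hL, hR] at hkey
    have hring : (β1 * S1 - (d1 + μ + u11)) * (β4 * S2 - (d2 + μ))
        = ((d1 + μ + u11) - β1 * S1) * ((d2 + μ) - β4 * S2) := by ring
    linarith [hkey, hring]
end

section
/- At the disease-free equilibrium, R0 is a decreasing function of the treatment rate u11: if u11 < u11' and β1·S1* > 0, then R0(u11') < R0(u11), where R0(u) = (β1·S1*·p(u) + β4·S2*·q + √((β1·S1*·p(u) - β4·S2*·q)² + 4·S1*·S2*·β2·β3·p(u)·q))/2 with p(u) = 1/(d1+μ+u) and q = 1/(d2+μ), assuming S1*, S2* > 0, β2·β3 > 0, d1+μ > 0, d2+μ > 0. -/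
lemma R0_aux (a b c p1 p2 : ℝ) (ha : 0 < a) (hc : 0 < c) (hp1 : 0 < p1)
    (hlt : p1 < p2) :
    (a * p1 + b + Real.sqrt ((a * p1 - b) ^ 2 + c * p1)) / 2
      < (a * p2 + b + Real.sqrt ((a * p2 - b) ^ 2 + c * p2)) / 2 := by
  have hp2 : 0 < p2 := hp1.trans hlt
  set D1 : ℝ := (a * p1 - b) ^ 2 + c * p1 with hD1
  set D2 : ℝ := (a * p2 - b) ^ 2 + c * p2 with hD2
  have hD1nn : 0 ≤ D1 := by positivity
  have hD2pos : 0 < D2 := by positivity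
  set sA := Real.sqrt D1 with hsA
  set sB := Real.sqrt D2 with hsB
  have hsAnn : 0 ≤ sA := Real.sqrt_nonneg _
  have hsAsq : sA ^ 2 = D1 := Real.sq_sqrt hD1nn
  have hsBpos : 0 < sB := Real.sqrt_pos.mpr hD2pos
  have hsAlb : b - a * p1 ≤ sA := by
    have h1 : b - a * p1 ≤ |a * p1 - b| := by
      rw [abs_sub_comm]; exact le_abs_self _
    have h2 : |a * p1 - b| = Real.sqrt ((a * p1 - b) ^ 2) := by
      rw [Real.sqrt_sq_eq_abs]
    have h3 : Real.sqrt ((a * p1 - b) ^ 2) ≤ sA := by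
      apply Real.sqrt_le_sqrt; nlinarith
    linarith [h2 ▸ h1]
  have key : sA + a * (p1 - p2) < sB := by
    rcases le_or_gt (sA + a * (p1 - p2)) 0 with h | h
    · linarith
    · rw [show sB = Real.sqrt D2 from rfl, Real.lt_sqrt (le_of_lt h)]
      have hexp : (sA + a * (p1 - p2)) ^ 2
          = D1 + 2 * sA * (a * (p1 - p2)) + (a * (p1 - p2)) ^ 2 := by
        rw [← hsAsq]; ring
      nlinarith [mul_le_mul_of_nonneg_left hsAlb
        (show (0:ℝ) ≤ 2 * a * (p2 - p1) by nlinarith),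
        mul_pos hc (show (0:ℝ) < p2 - p1 by linarith)]
  linarith

/-- `R0` is a strictly decreasing function of the treatment rate `u11`. -/
theorem R0_decreasing_in_treatment
    (β1 β2 β3 β4 d1 d2 μ S1 S2 : ℝ)
    (hS1 : 0 < S1) (hS2 : 0 < S2)
    (hβ1S1 : 0 < β1 * S1) (hβ2β3 : 0 < β2 * β3)
    (hd1μ : 0 < d1 + μ) (hd2μ : 0 < d2 + μ)
    (p : ℝ → ℝ) (hp : p = fun u => 1 / (d1 + μ + u))
    (q : ℝ) (hq : q = 1 / (d2 + μ))
    (R0 : ℝ → ℝ)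
    (hR0 : R0 = fun u =>
      (β1 * S1 * p u + β4 * S2 * q
        + Real.sqrt ((β1 * S1 * p u - β4 * S2 * q) ^ 2
            + 4 * S1 * S2 * β2 * β3 * p u * q)) / 2)
    (u11 u11' : ℝ) (hu11 : 0 ≤ u11) (hlt : u11 < u11') :
    R0 u11' < R0 u11 := by
  have h1 : 0 < d1 + μ + u11 := by linarith
  have h2 : 0 < d1 + μ + u11' := by linarith
  subst hp hq hR0
  simp only
  have hqpos : 0 < 1 / (d2 + μ) := by positivity
  have e1 : 4 * S1 * S2 * β2 * β3 * (1 / (d1 + μ + u11')) * (1 / (d2 + μ))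
      = (4 * S1 * S2 * β2 * β3 * (1 / (d2 + μ))) * (1 / (d1 + μ + u11')) := by ring
  have e2 : 4 * S1 * S2 * β2 * β3 * (1 / (d1 + μ + u11)) * (1 / (d2 + μ))
      = (4 * S1 * S2 * β2 * β3 * (1 / (d2 + μ))) * (1 / (d1 + μ + u11)) := by ring
  rw [e1, e2]
  have hc : 0 < 4 * S1 * S2 * β2 * β3 * (1 / (d2 + μ)) := by
    have := mul_pos (mul_pos (show (0:ℝ) < 4 * S1 * S2 by positivity) hβ2β3) hqpos
    nlinarith
  have hp1 : 0 < 1 / (d1 + μ + u11') := by positivity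
  have hplt : 1 / (d1 + μ + u11') < 1 / (d1 + μ + u11) :=
    one_div_lt_one_div_of_lt h1 (by linarith)
  exact R0_aux (β1 * S1) (β4 * S2 * (1 / (d2 + μ)))
    (4 * S1 * S2 * β2 * β3 * (1 / (d2 + μ))) _ _ hβ1S1 hc hp1 hplt
end
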